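/- (Amitsur) Let U and V be vector spaces over a field K and let T_1, …, T_d : U → V be linear maps that are locally linearly dependent. Then there exist scalars α_1, …, α_d ∈ K, not all zero, such that the linear map S = α_1 T_1 + … + α_d T_d has rank at most C(d+1, 2) − 1 = d(d+1)/2 − 1. -/

import Mathlib

open Filter

/-- The set of products of at most `r` elements of `S` (monomials of length `≤ r`). -/
def monomials {A : Type*} [Monoid A] (S : Set A) (r : ℕ) : Set A :=
  {a | ∃ l : List A, l.length ≤ r ∧ (∀ x ∈ l, x ∈ S) ∧ l.prod = a}

/-- `A_{≤ r}`: the `K`-linear span of the monomials of length at most `r` in `S`. -/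
def ballSpan (K : Type*) {A : Type*} [Field K] [Ring A] [Algebra K A]
    (S : Set A) (r : ℕ) : Submodule K A :=
  Submodule.span K (monomials S r)

/-- The normalized rank `rk(X) = rank(X)/n` of an `n × n` matrix. -/
noncomputable def nrk {K : Type*} [Field K] {n : ℕ} (X : Matrix (Fin n) (Fin n) K) : ℝ :=
  (X.rank : ℝ) / n

/-- `φ : A → M_n(K)` is a `d`-approximation of `(A, S)`. -/
def IsDApprox (K : Type*) {A : Type*} [Field K] [Ring A] [Algebra K A]
    (S : Set A) (d n : ℕ) (φ : A →ₗ[K] Matrix (Fin n) (Fin n) K) : Prop :=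
  (∃ U : Submodule K (Fin n → K),
    ((1 : ℝ) - 1 / d) * n ≤ Module.finrank K U ∧
    ∀ x ∈ ballSpan K S d, ∀ y ∈ ballSpan K S d, ∀ u ∈ U,
      (φ (x * y)).mulVec u = (φ x).mulVec ((φ y).mulVec u)) ∧
  (∀ a ∈ ballSpan K S d, a ≠ 0 → (1 : ℝ) - 1 / d ≤ nrk (φ a))

/-- A sequence of linear maps `φ_k : A → M_{n_k}(K)` is a linear sofic approximation if for
every `d` it is eventually a `d`-approximation. -/
def IsLinearSoficApprox (K : Type*) {A : Type*} [Field K] [Ring A] [Algebra K A]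
    (S : Set A) (n : ℕ → ℕ) (φ : ∀ k, A →ₗ[K] Matrix (Fin (n k)) (Fin (n k)) K) : Prop :=
  ∀ d : ℕ, ∀ᶠ k in atTop, IsDApprox K S d (n k) (φ k)

/-- `A` is an amenable `K`-algebra: there is an exhausting increasing sequence of
finite-dimensional subspaces which is a Følner sequence. -/
def IsAmenableAlgebra (K A : Type*) [Field K] [Ring A] [Algebra K A] : Prop :=
  ∃ W : ℕ → Submodule K A, Monotone W ∧ (∀ i, FiniteDimensional K (W i)) ∧
    (⨆ i, W i) = ⊤ ∧
    ∀ V : Submodule K A, FiniteDimensional K V →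
      Tendsto (fun i => (Module.finrank K ↥(V * W i) : ℝ) / Module.finrank K (W i))
        atTop (nhds 1)

/-- The linear map `a ↦ φ(a) v`. -/
def evalVec {K : Type*} [Field K] {A : Type*} [Ring A] [Algebra K A] {n : ℕ}
    (φ : A →ₗ[K] Matrix (Fin n) (Fin n) K) (v : Fin n → K) : A →ₗ[K] (Fin n → K) where
  toFun a := (φ a).mulVec v
  map_add' a b := by simp [Matrix.add_mulVec]
  map_smul' c a := by simp [Matrix.smul_mulVec]

/-- `v` is a `W`-root vector for `φ`: `w ↦ φ(w) v` is injective on `W` and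
`φ(xy)v = φ(x)(φ(y)v)` for all `x, y ∈ W`. -/
def IsRootVector {K : Type*} [Field K] {A : Type*} [Ring A] [Algebra K A] {n : ℕ}
    (φ : A →ₗ[K] Matrix (Fin n) (Fin n) K) (W : Submodule K A) (v : Fin n → K) : Prop :=
  Set.InjOn (fun a => (φ a).mulVec v) (W : Set A) ∧
  ∀ x ∈ W, ∀ y ∈ W, (φ (x * y)).mulVec v = (φ x).mulVec ((φ y).mulVec v)

/-- `A` is weakly stable (w.r.t. the generating set `S`). -/
def WeaklyStable (K : Type*) {A : Type*} [Field K] [Ring A] [Algebra K A] (S : Set A) : Prop :=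
  ∀ ε : ℝ, 0 < ε → ∃ d : ℕ, ∀ n : ℕ, ∀ φ : A →ₗ[K] Matrix (Fin n) (Fin n) K,
    IsDApprox K S d n φ →
      ∃ ψ : A →ₗ[K] Matrix (Fin n) (Fin n) K,
        (∀ a b : A, ψ (a * b) = ψ a * ψ b) ∧ ∀ s ∈ S, nrk (φ s - ψ s) < ε


open Polynomial in
lemma exists_isUnit_add_smul_one {K : Type*} [Field K] [Infinite K] {n : ℕ}
    (A : Matrix (Fin n) (Fin n) K) : ∃ t : K, IsUnit (A + t • 1) := by
  classical
  set f := Matrix.charpoly (-A) with hf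
  have hf0 : f ≠ 0 := (Matrix.charpoly_monic _).ne_zero
  obtain ⟨t, ht⟩ := f.exists_eval_ne_zero_of_natDegree_lt_card hf0
    (lt_of_lt_of_le (Cardinal.nat_lt_aleph0 _) (Cardinal.infinite_iff.mp ‹Infinite K›))
  refine ⟨t, ?_⟩
  have key : f.eval t = (A + t • 1).det := by
    rw [hf, Matrix.charpoly, eval_det, Matrix.matPolyEquiv_charmatrix,
      Polynomial.eval_sub, Polynomial.eval_X, Polynomial.eval_C]
    congr 1
    ext k i
    by_cases h : k = i
    · subst h
      simp [Matrix.scalar_apply, Matrix.one_apply]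
      ring
    · simp [Matrix.scalar_apply, Matrix.one_apply, h, Matrix.diagonal_apply_ne _ h]
  rw [key] at ht
  exact (Matrix.isUnit_iff_isUnit_det _).mpr (isUnit_iff_ne_zero.mpr ht)

open Matrix in
lemma exists_translate_linearIndependent {K U W : Type*} [Field K] [Infinite K]
    [AddCommGroup U] [Module K U] [AddCommGroup W] [Module K W] {n : ℕ}
    (R : Fin n → U →ₗ[K] W) (b u1 : U)
    (h1 : LinearIndependent K fun i => R i u1) :
    ∃ t : K, LinearIndependent K fun i => R i (b + t • u1) := by
  classical
  set Y : Submodule K W := Submodule.span K (Set.range fun i => R i u1) with hY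
  let By : Module.Basis (Fin n) K Y := Module.Basis.span h1
  obtain ⟨Q, hQ⟩ := Y.exists_isCompl
  set p : W →ₗ[K] Y := Submodule.linearProjOfIsCompl Y Q hQ with hp
  set A : Matrix (Fin n) (Fin n) K := fun k i => By.repr (p (R i b)) k with hA
  obtain ⟨t, htu⟩ := exists_isUnit_add_smul_one A
  refine ⟨t, ?_⟩
  set e : Y →ₗ[K] (Fin n → K) :=
    (Finsupp.linearEquivFunOnFinite K K (Fin n)).toLinearMap.comp By.repr.toLinearMap with he
  have hp1 : ∀ i, p (R i u1) = By i := by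
    intro i
    rw [show R i u1 = ((By i : Y) : W) from (congrArg Subtype.val (Module.Basis.span_apply h1 i)).symm]
    exact Submodule.linearProjOfIsCompl_apply_left hQ (By i)
  set B : Matrix (Fin n) (Fin n) K := A + t • 1 with hB
  have hcols : LinearIndependent K (fun i => Bᵀ i) :=
    Matrix.linearIndependent_cols_iff_isUnit.mpr htu
  have key : ∀ i, e (p (R i (b + t • u1))) = Bᵀ i := by
    intro i
    funext k
    have h2 : p (R i (b + t • u1)) = p (R i b) + t • By i := by
      rw [map_add, _root_.map_smul, map_add, _root_.map_smul, hp1]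
    rw [h2]
    simp only [he, hB, map_add, _root_.map_smul, LinearMap.comp_apply, LinearEquiv.coe_toLinearMap,
      Module.Basis.repr_self, Matrix.transpose_apply, Matrix.add_apply, Matrix.smul_apply,
      Matrix.one_apply, Pi.add_apply, Pi.smul_apply, Finsupp.linearEquivFunOnFinite_apply,
      Finsupp.coe_add, Finsupp.coe_smul, Finsupp.single_apply, smul_eq_mul]
    by_cases h : i = k <;> simp [h, hA, eq_comm]
  have hw : LinearIndependent K fun i => p (R i (b + t • u1)) := by
    apply LinearIndependent.of_comp e
    rw [show (⇑e ∘ fun i => p (R i (b + t • u1))) = fun i => Bᵀ i from funext key]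
    exact hcols
  exact LinearIndependent.of_comp p hw

section
universe x y z

theorem amitsur_inf {K : Type x} {U : Type y} [Field K] [Infinite K]
    [AddCommGroup U] [Module K U] :
    ∀ (n : ℕ) (V : Type z) (iV : AddCommGroup V) (mV : Module K V)
      (T : Fin n → U →ₗ[K] V),
      (∀ u : U, ¬ LinearIndependent K fun i => T i u) →
      ∃ α : Fin n → K, α ≠ 0 ∧ ∃ s : Finset V, s.card ≤ n.choose 2 ∧
        LinearMap.range (∑ i, α i • T i) ≤ Submodule.span K (s : Set V) := by
  intro n
  induction n with
  | zero =>
    intro V iV mV T hT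
    exact absurd linearIndependent_empty_type (hT 0)
  | succ n IH =>
    intro V iV mV T hT
    classical
    -- extraction of an exact relation expressing `T (last)` at a point of independence
    have extract : ∀ w : U, (LinearIndependent K fun i : Fin n => T i.castSucc w) →
        ∃ ν : Fin n → K, T (Fin.last n) w = ∑ i : Fin n, ν i • T i.castSucc w := by
      intro w hw
      obtain ⟨ρ, hρ, iρ, hiρ⟩ := Fintype.not_linearIndependent_iff.mp (hT w)
      have hρl : ρ (Fin.last n) ≠ 0 := by
        intro h0
        rw [Fin.sum_univ_castSucc, h0, zero_smul, add_zero] at hρ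
        have hz := Fintype.linearIndependent_iff.mp hw _ hρ
        rcases Fin.eq_castSucc_or_eq_last iρ with ⟨j, rfl⟩ | rfl
        · exact hiρ (hz j)
        · exact hiρ h0
      have hsum0 : ∑ i : Fin n, ρ i.castSucc • T i.castSucc w
          = -(ρ (Fin.last n) • T (Fin.last n) w) := by
        rw [Fin.sum_univ_castSucc] at hρ
        exact eq_neg_of_add_eq_zero_left hρ
      refine ⟨fun i => -(ρ (Fin.last n))⁻¹ * ρ i.castSucc, ?_⟩
      symm
      simp only [mul_smul]
      rw [← Finset.smul_sum, hsum0, neg_smul, smul_neg, neg_neg, smul_smul,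
        inv_mul_cancel₀ hρl, one_smul]
    by_cases hA : ∀ u : U, ¬ LinearIndependent K fun i : Fin n => T i.castSucc u
    · obtain ⟨β, hβ, s, hs, hr⟩ := IH V iV mV (fun i => T i.castSucc) hA
      set α : Fin (n+1) → K := Fin.snoc β 0 with hα
      have hsum : (∑ i : Fin (n+1), α i • T i)
          = ∑ i : Fin n, β i • T i.castSucc := by
        rw [Fin.sum_univ_castSucc]
        simp [hα]
      refine ⟨α, ?_, s, le_trans hs (Nat.choose_le_choose 2 (Nat.le_succ n)), ?_⟩
      · intro h
        apply hβ
        funext i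
        have := congrFun h i.castSucc
        simpa [hα] using this
      · rw [hsum]; exact hr
    · push_neg at hA
      obtain ⟨u0, hu0⟩ := hA
      obtain ⟨c, hc⟩ := extract u0 hu0
      set W0 : Submodule K V :=
        Submodule.span K (Set.range fun i : Fin n => T i.castSucc u0) with hW0
      set π := W0.mkQ with hπdef
      have hπ0 : ∀ i : Fin (n+1), π (T i u0) = 0 := by
        intro i
        rcases Fin.eq_castSucc_or_eq_last i with ⟨j, rfl⟩ | rfl
        · rw [hπdef, Submodule.mkQ_apply, Submodule.Quotient.mk_eq_zero]
          exact Submodule.subset_span ⟨j, rfl⟩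
        · rw [hπdef, Submodule.mkQ_apply, Submodule.Quotient.mk_eq_zero, hc]
          exact Submodule.sum_mem _ fun i _ =>
            Submodule.smul_mem _ _ (Submodule.subset_span ⟨i, rfl⟩)
      set S : U →ₗ[K] V := T (Fin.last n) - ∑ i : Fin n, c i • T i.castSucc with hSdef
      -- Lemma A : S kills every vector which is independent modulo W0
      have lemA : ∀ u : U,
          (LinearIndependent K fun i : Fin n => π (T i.castSucc u)) → S u = 0 := by
        intro u hu
        have huV : LinearIndependent K fun i : Fin n => T i.castSucc u :=
          LinearIndependent.of_comp π hu
        obtain ⟨ν, hνu⟩ := extract u huV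
        obtain ⟨μ, hμ, i2, hi2⟩ := Fintype.not_linearIndependent_iff.mp (hT (u + u0))
        -- project the relation at `u + u0` to the quotient
        have hμq : ∑ i : Fin (n+1), μ i • π (T i u) = 0 := by
          have h := congrArg π hμ
          rw [map_sum, map_zero] at h
          rw [← h]
          refine Finset.sum_congr rfl fun i _ => ?_
          rw [map_smul, map_add (T i), map_add π, hπ0 i, add_zero]
        have hπν : π (T (Fin.last n) u) = ∑ i : Fin n, ν i • π (T i.castSucc u) := by
          rw [hνu, map_sum]
          exact Finset.sum_congr rfl fun i _ => map_smul π _ _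
        have hcomb : ∑ i : Fin n,
            (μ i.castSucc + μ (Fin.last n) * ν i) • π (T i.castSucc u) = 0 := by
          rw [Fin.sum_univ_castSucc, hπν, Finset.smul_sum] at hμq
          rw [← hμq]
          rw [← Finset.sum_add_distrib]
          refine Finset.sum_congr rfl fun i _ => ?_
          rw [add_smul, smul_smul]
        have hcoef := Fintype.linearIndependent_iff.mp hu _ hcomb
        have hμl : μ (Fin.last n) ≠ 0 := by
          intro h0
          rcases Fin.eq_castSucc_or_eq_last i2 with ⟨j, rfl⟩ | rfl
          · have hj := hcoef j
            rw [h0, zero_mul, add_zero] at hj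
            exact hi2 hj
          · exact hi2 h0
        -- turn the relation at `u + u0` into an exact relation with coefficients ν
        set τ : Fin (n+1) → K := Fin.snoc (fun i => -ν i) 1 with hτ
        have hμτ : ∀ i, μ i = μ (Fin.last n) * τ i := by
          intro i
          rcases Fin.eq_castSucc_or_eq_last i with ⟨j, rfl⟩ | rfl
          · have hj := hcoef j
            rw [eq_neg_of_add_eq_zero_left hj]
            simp [hτ, mul_neg]
          · simp [hτ]
        have hτ0 : ∑ i : Fin (n+1), τ i • T i (u + u0) = 0 := by
          have : μ (Fin.last n) • ∑ i : Fin (n+1), τ i • T i (u + u0) = 0 := by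
            rw [Finset.smul_sum, ← hμ]
            refine Finset.sum_congr rfl fun i _ => ?_
            rw [smul_smul, ← hμτ i]
          rcases smul_eq_zero.mp this with h | h
          · exact absurd h hμl
          · exact h
        have hτu : ∑ i : Fin (n+1), τ i • T i u = 0 := by
          rw [Fin.sum_univ_castSucc]
          simp only [hτ, Fin.snoc_castSucc, Fin.snoc_last, one_smul, neg_smul]
          rw [Finset.sum_neg_distrib, hνu, neg_add_cancel]
        have hτ00 : ∑ i : Fin (n+1), τ i • T i u0 = 0 := by
          have hsplit : ∀ i : Fin (n+1), τ i • T i (u + u0) = τ i • T i u + τ i • T i u0 := by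
            intro i; rw [map_add (T i), smul_add]
          rw [Finset.sum_congr rfl (fun i _ => hsplit i), Finset.sum_add_distrib,
            hτu, zero_add] at hτ0
          exact hτ0
        -- hence ν = c by independence at u0
        have hνc : ∀ i, ν i = c i := by
          have h1 : T (Fin.last n) u0 = ∑ i : Fin n, ν i • T i.castSucc u0 := by
            rw [Fin.sum_univ_castSucc] at hτ00
            simp only [hτ, Fin.snoc_castSucc, Fin.snoc_last, one_smul, neg_smul] at hτ00
            rw [Finset.sum_neg_distrib] at hτ00
            exact (neg_add_eq_zero.mp hτ00).symm
          have h2 : ∑ i : Fin n, (ν i - c i) • T i.castSucc u0 = 0 := by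
            simp only [sub_smul]
            rw [Finset.sum_sub_distrib, ← h1, ← hc, sub_self]
          have := Fintype.linearIndependent_iff.mp hu0 _ h2
          intro i
          have hi := this i
          exact sub_eq_zero.mp hi
        -- conclude
        rw [hSdef]
        simp only [LinearMap.sub_apply, LinearMap.sum_apply, LinearMap.smul_apply]
        rw [hνu, sub_eq_zero]
        exact Finset.sum_congr rfl fun i _ => by rw [hνc i]
      -- Case split on whether the first n maps are LLD modulo W0
      by_cases hB : ∀ u : U, ¬ LinearIndependent K fun i : Fin n => π (T i.castSucc u)
      · -- recurse in the quotient
        obtain ⟨β, hβ, sq, hsq, hrq⟩ := IH (V ⧸ W0) inferInstance inferInstance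
          (fun i => π ∘ₗ T i.castSucc) (by
            intro u h
            exact hB u (by simpa using h))
        set pick : V ⧸ W0 → V := Function.surjInv W0.mkQ_surjective with hpick
        set s : Finset V :=
          sq.image pick ∪ Finset.image (fun i : Fin n => T i.castSucc u0) Finset.univ with hs
        set α : Fin (n+1) → K := Fin.snoc β 0 with hα
        have hsum : (∑ i : Fin (n+1), α i • T i) = ∑ i : Fin n, β i • T i.castSucc := by
          rw [Fin.sum_univ_castSucc]
          simp [hα]
        have hW0s : W0 ≤ Submodule.span K (s : Set V) := by
          rw [hW0, Submodule.span_le]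
          rintro - ⟨i, rfl⟩
          apply Submodule.subset_span
          exact Finset.mem_coe.mpr (Finset.mem_union_right _
            (Finset.mem_image_of_mem _ (Finset.mem_univ i)))
        refine ⟨α, ?_, s, ?_, ?_⟩
        · intro h
          apply hβ
          funext i
          have := congrFun h i.castSucc
          simpa [hα] using this
        · calc s.card ≤ (sq.image pick).card
                + (Finset.image (fun i : Fin n => T i.castSucc u0) Finset.univ).card :=
              Finset.card_union_le _ _
          _ ≤ sq.card + n := by
              refine Nat.add_le_add Finset.card_image_le
                (le_trans Finset.card_image_le (le_of_eq (by simp)))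
          _ ≤ n.choose 2 + n := by omega
          _ = (n+1).choose 2 := by
              have h20 : (n+1).choose 2 = n.choose 1 + n.choose 2 := Nat.choose_succ_succ n 1
              rw [h20, Nat.choose_one_right]
              omega
        · rw [hsum]
          rintro v ⟨u, rfl⟩
          have h1 : π ((∑ i : Fin n, β i • T i.castSucc) u)
              ∈ Submodule.span K (sq : Set (V ⧸ W0)) := by
            apply hrq
            refine ⟨u, ?_⟩
            simp only [LinearMap.sum_apply, LinearMap.smul_apply, LinearMap.comp_apply,
              map_sum, _root_.map_smul]
          have h2 : Submodule.span K (sq : Set (V ⧸ W0))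
              ≤ Submodule.map π (Submodule.span K (s : Set V)) := by
            rw [Submodule.map_span]
            apply Submodule.span_mono
            intro q hq
            refine ⟨pick q, ?_, Function.surjInv_eq W0.mkQ_surjective q⟩
            exact Finset.mem_coe.mpr (Finset.mem_union_left _
              (Finset.mem_image_of_mem pick (Finset.mem_coe.mp hq)))
          obtain ⟨p', hp', hpq⟩ := h2 h1
          have hker : (∑ i : Fin n, β i • T i.castSucc) u - p'
              ∈ Submodule.span K (s : Set V) := by
            apply hW0s
            have hmem : (∑ i : Fin n, β i • T i.castSucc) u - p' ∈ LinearMap.ker π := by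
              rw [LinearMap.mem_ker, map_sub, hpq, sub_self]
            rwa [hπdef, Submodule.ker_mkQ] at hmem
          have : (∑ i : Fin n, β i • T i.castSucc) u
              = p' + ((∑ i : Fin n, β i • T i.castSucc) u - p') := by abel
          rw [this]
          exact Submodule.add_mem _ hp' hker
      · -- a vector independent modulo W0 exists : S vanishes identically
        push_neg at hB
        obtain ⟨u1, hu1⟩ := hB
        have hS0 : S = 0 := by
          ext b
          obtain ⟨t, ht⟩ := exists_translate_linearIndependent
            (fun i => π ∘ₗ T i.castSucc) b u1 (by simpa using hu1)
          have h1 : S (b + t • u1) = 0 := lemA _ (by simpa using ht)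
          have h2 : S u1 = 0 := lemA _ hu1
          have h3 : S b = S (b + t • u1) - t • S u1 := by
            rw [map_add, map_smul]
            abel
          rw [h3, h1, h2, smul_zero, sub_zero, LinearMap.zero_apply]
        set α : Fin (n+1) → K := Fin.snoc (fun i => -c i) 1 with hα
        refine ⟨α, ?_, ∅, by simp, ?_⟩
        · intro h
          have := congrFun h (Fin.last n)
          simp [hα] at this
        · have hsum : (∑ i : Fin (n+1), α i • T i) = S := by
            rw [Fin.sum_univ_castSucc, hSdef]
            simp only [hα, Fin.snoc_castSucc, Fin.snoc_last, one_smul, neg_smul]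
            rw [Finset.sum_neg_distrib]
            abel
          rw [hsum, hS0]
          simp

end


theorem amitsur_fin {K U V : Type*} [Field K] [Finite K]
    [AddCommGroup U] [Module K U] [AddCommGroup V] [Module K V] {n : ℕ}
    (T : Fin n → U →ₗ[K] V)
    (hT : ∀ u : U, ¬ LinearIndependent K fun i => T i u) :
    ∃ α : Fin n → K, α ≠ 0 ∧
      Module.rank K (LinearMap.range (∑ i, α i • T i)) ≤ ((n - 1 : ℕ) : Cardinal) := by
  classical
  haveI : Fintype K := Fintype.ofFinite K
  by_contra hcon
  push_neg at hcon
  rcases Nat.eq_zero_or_pos n with rfl | hn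
  · obtain ⟨g, hg, i, hi⟩ := Fintype.not_linearIndependent_iff.mp (hT 0)
    exact i.elim0
  have hrk : ∀ α : Fin n → K, α ≠ 0 → (n : Cardinal) ≤ LinearMap.rank (∑ i, α i • T i) := by
    intro α hα
    have h1 := hcon α hα
    have h2 : (((n-1)+1 : ℕ) : Cardinal) ≤ LinearMap.rank (∑ i, α i • T i) := by
      rw [Nat.cast_add, Nat.cast_one]
      exact (Cardinal.add_one_le_succ _).trans (Order.succ_le_of_lt h1)
    rwa [Nat.sub_add_cancel hn] at h2
  have hsel : ∀ α : {a : Fin n → K // a ≠ 0}, ∃ s : Finset U, s.card = n ∧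
      LinearIndependent K fun x : (s : Set U) => (∑ i, α.1 i • T i) x :=
    fun α => LinearMap.le_rank_iff_exists_linearIndependent_finset.mp (hrk α.1 α.2)
  choose sel hcard hind using hsel
  set gens : Set U := ⋃ α : {a : Fin n → K // a ≠ 0}, (sel α : Set U) with hgens
  have hfin : gens.Finite := Set.finite_iUnion fun α => (sel α).finite_toSet
  set U' : Submodule K U := Submodule.span K gens with hU'
  haveI : FiniteDimensional K U' := FiniteDimensional.span_of_finite K hfin
  set D := Module.finrank K U' with hD
  set L : {a : Fin n → K // a ≠ 0} → (U' →ₗ[K] V) :=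
    fun α => (∑ i, α.1 i • T i).domRestrict U' with hL
  have hmemU' : ∀ (α) (x : U), x ∈ sel α → x ∈ U' := fun α x hx =>
    Submodule.subset_span (Set.mem_iUnion.mpr ⟨α, hx⟩)
  have hrange : ∀ α, n ≤ Module.finrank K (LinearMap.range (L α)) := by
    intro α
    have hwi : LinearIndependent K (fun x : ((sel α : Set U)) =>
        (⟨(∑ i, α.1 i • T i) x.1, ⟨⟨x.1, hmemU' α x.1 x.2⟩, rfl⟩⟩ :
          LinearMap.range (L α))) := by
      apply LinearIndependent.of_comp (LinearMap.range (L α)).subtype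
      exact hind α
    have hcle := hwi.fintype_card_le_finrank
    rw [show Fintype.card ((sel α : Set U)) = n from by
      rw [← Set.toFinset_card, Finset.toFinset_coe]; exact hcard α] at hcle
    exact hcle
  have hker : ∀ α, Module.finrank K (LinearMap.ker (L α)) + n ≤ D := by
    intro α
    have hrn := LinearMap.finrank_range_add_finrank_ker (L α)
    have := hrange α
    omega
  haveI : Finite U' := Module.finite_of_finite K
  haveI : Fintype U' := Fintype.ofFinite _
  have hcover : ∀ x : U', ∃ α : {a : Fin n → K // a ≠ 0}, x ∈ LinearMap.ker (L α) := by
    intro x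
    obtain ⟨g, hg, i, hi⟩ := Fintype.not_linearIndependent_iff.mp (hT x)
    refine ⟨⟨g, fun h => hi (by rw [h]; rfl)⟩, ?_⟩
    rw [LinearMap.mem_ker]
    simp only [hL, LinearMap.domRestrict_apply, LinearMap.sum_apply, LinearMap.smul_apply]
    exact hg
  set q := Fintype.card K with hq
  have hq1 : 1 ≤ q := Fintype.card_pos
  have hcardU' : Fintype.card U' = q ^ D := Module.card_eq_pow_finrank
  have hcardker : ∀ α, Fintype.card (LinearMap.ker (L α)) ≤ q ^ (D - n) := by
    intro α
    have h1 : Fintype.card (LinearMap.ker (L α))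
        = q ^ (Module.finrank K (LinearMap.ker (L α))) := Module.card_eq_pow_finrank
    rw [h1]
    exact Nat.pow_le_pow_right hq1 (by have := hker α; omega)
  have hsub : (Finset.univ : Finset U') ⊆ Finset.univ.biUnion
      (fun α : {a : Fin n → K // a ≠ 0} =>
        Set.toFinset (LinearMap.ker (L α) : Set U')) := by
    intro x _
    obtain ⟨α, hα⟩ := hcover x
    exact Finset.mem_biUnion.mpr ⟨α, Finset.mem_univ _, Set.mem_toFinset.mpr hα⟩
  have hcount : q ^ D ≤ (q ^ n - 1) * q ^ (D - n) := by
    have h1 := Finset.card_le_card hsub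
    have h2 := Finset.card_biUnion_le (s := (Finset.univ : Finset {a : Fin n → K // a ≠ 0}))
      (t := fun α => Set.toFinset (LinearMap.ker (L α) : Set U'))
    have h3 : ∀ α : {a : Fin n → K // a ≠ 0},
        (Set.toFinset (LinearMap.ker (L α) : Set U')).card ≤ q ^ (D - n) := by
      intro α
      rw [Set.toFinset_card]
      exact le_trans (le_of_eq (Fintype.card_congr (Equiv.refl _))) (hcardker α)
    have h4 : ∑ α : {a : Fin n → K // a ≠ 0},
        (Set.toFinset (LinearMap.ker (L α) : Set U')).card
        ≤ (q ^ n - 1) * q ^ (D - n) := by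
      calc _ ≤ Fintype.card {a : Fin n → K // a ≠ 0} * q ^ (D - n) := by
            rw [← Finset.card_univ, ← smul_eq_mul]
            exact Finset.sum_le_card_nsmul _ _ _ fun α _ => h3 α
        _ = (q ^ n - 1) * q ^ (D - n) := by
            congr 1
            have h5 : Fintype.card {a : Fin n → K // ¬ a = 0}
                = Fintype.card (Fin n → K) - Fintype.card {a : Fin n → K // a = 0} :=
              Fintype.card_subtype_compl _
            have h6 : Fintype.card {a : Fin n → K // a = 0} = 1 :=
              Fintype.card_subtype_eq (0 : Fin n → K)
            have h7 : Fintype.card (Fin n → K) = q ^ n := by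
              rw [Fintype.card_fun]
              simp [hq]
            rw [h6, h7] at h5
            exact h5
    calc q ^ D = Fintype.card U' := hcardU'.symm
      _ = (Finset.univ : Finset U').card := Finset.card_univ.symm
      _ ≤ _ := h1
      _ ≤ _ := h2
      _ ≤ _ := h4
  have hDn : n ≤ D := by
    have hα0 : (fun _ : Fin n => (1:K)) ≠ 0 := by
      intro h
      have := congrFun h ⟨0, hn⟩
      simp at this
    have := hker ⟨_, hα0⟩
    omega
  have hpow : q ^ n * q ^ (D - n) = q ^ D := by
    rw [← pow_add]
    congr 1
    omega
  have hpos : 1 ≤ q ^ (D - n) := Nat.one_le_pow _ _ hq1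
  have hpos2 : q ^ (D - n) ≤ q ^ D := Nat.pow_le_pow_right hq1 (by omega)
  rw [Nat.sub_mul, hpow, one_mul] at hcount
  omega


/-- Theorem (Amitsur): if `T_1, …, T_d : U → V` are locally linearly dependent, then some
nontrivial linear combination has rank at most `C(d+1, 2) - 1`. -/
theorem amitsur_locally_linearly_dependent
    {K : Type*} [Field K] {U V : Type*} [AddCommGroup U] [Module K U]
    [AddCommGroup V] [Module K V] {d : ℕ} (T : Fin d → U →ₗ[K] V)
    (hT : ∀ u : U, ¬ LinearIndependent K fun i => T i u) :
    ∃ α : Fin d → K, α ≠ 0 ∧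
      Module.rank K (LinearMap.range (∑ i, α i • T i))
        ≤ (((d + 1).choose 2 - 1 : ℕ) : Cardinal) := by
  rcases Nat.eq_zero_or_pos d with rfl | hd
  · exact absurd linearIndependent_empty_type (hT 0)
  have hch : (d+1).choose 2 = d + d.choose 2 := by
    have h1 : (d+1).choose 2 = d.choose 1 + d.choose 2 := Nat.choose_succ_succ d 1
    rw [Nat.choose_one_right] at h1
    exact h1
  rcases finite_or_infinite K with hK | hK
  · obtain ⟨α, hα, hrank⟩ := amitsur_fin T hT
    refine ⟨α, hα, le_trans hrank ?_⟩
    exact Nat.cast_le.mpr (by omega)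
  · obtain ⟨α, hα, s, hs, hr⟩ := amitsur_inf d V inferInstance inferInstance T hT
    refine ⟨α, hα, ?_⟩
    calc Module.rank K (LinearMap.range (∑ i, α i • T i))
        ≤ Module.rank K (Submodule.span K (s : Set V)) := Submodule.rank_mono hr
      _ ≤ Cardinal.mk (s : Set V) := rank_span_le _
      _ = s.card := Cardinal.mk_coe_finset
      _ ≤ (((d + 1).choose 2 - 1 : ℕ) : Cardinal) := Nat.cast_le.mpr (by omega)
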